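/- For every n ≥ 0, r̃_{Ψ,n} is a polynomial in x with coefficients in B ⊗ ℚ, and the recurrence r̃_{Ψ,n+1} = 2·(2·(d/dx r̃_{Ψ,n})·𝖿(x) + (1 − 2n)·r̃_{Ψ,n}·(d/dx 𝖿(x))) holds. -/

import Mathlib

open Polynomial

noncomputable section

/-- Index set for the variables pᵢ, qᵢ, bᵢ. -/
abbrev VarsB (g m : ℕ) := (Fin (2*g+1) ⊕ Fin (g+1)) ⊕ Fin (m+1)

/-- B = Λ[b₀,…,b_m] = ℤ[p₀,…,p_{2g},q₀,…,q_g,b₀,…,b_m]. -/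
abbrev BRing (g m : ℕ) := MvPolynomial (VarsB g m) ℤ

/-- B ⊗ ℚ. -/
abbrev BQ (g m : ℕ) := MvPolynomial (VarsB g m) ℚ

/-- 𝗉(x) ∈ B[x]. -/
def pB (g m : ℕ) : Polynomial (BRing g m) :=
  X ^ (2*g+1) + ∑ i : Fin (2*g+1), C (MvPolynomial.X (Sum.inl (Sum.inl i))) * X ^ (i : ℕ)

/-- 𝗊(x) ∈ B[x]. -/
def qB (g m : ℕ) : Polynomial (BRing g m) :=
  ∑ i : Fin (g+1), C (MvPolynomial.X (Sum.inl (Sum.inr i))) * X ^ (i : ℕ)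

/-- Ψ(x) = b₀ + b₁x + ⋯ + b_mx^m ∈ B[x]. -/
def PsiB (g m : ℕ) : Polynomial (BRing g m) :=
  ∑ i : Fin (m+1), C (MvPolynomial.X (Sum.inr i)) * X ^ (i : ℕ)

/-- 𝗉(x) ∈ (B⊗ℚ)[x]. -/
def pBQ (g m : ℕ) : Polynomial (BQ g m) :=
  X ^ (2*g+1) + ∑ i : Fin (2*g+1), C (MvPolynomial.X (Sum.inl (Sum.inl i))) * X ^ (i : ℕ)

/-- 𝗊(x) ∈ (B⊗ℚ)[x]. -/
def qBQ (g m : ℕ) : Polynomial (BQ g m) :=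
  ∑ i : Fin (g+1), C (MvPolynomial.X (Sum.inl (Sum.inr i))) * X ^ (i : ℕ)

/-- 𝖿(x) = 𝗉(x) + 𝗊(x)²/4 ∈ (B⊗ℚ)[x]. -/
def fBQ (g m : ℕ) : Polynomial (BQ g m) :=
  pBQ g m + C (MvPolynomial.C ((4:ℚ)⁻¹)) * qBQ g m ^ 2

/-- The evaluation map (B⊗ℚ)[x] → L extending φ : B[x] → L. -/
def psiB (g m : ℕ) (L : Type) [Field L] [CharZero L]
    (φ : Polynomial (BRing g m) →+* L) : Polynomial (BQ g m) →+* L :=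
  Polynomial.eval₂RingHom
    (MvPolynomial.eval₂Hom (Rat.castHom L)
      (fun v => φ (Polynomial.C (MvPolynomial.X v)))) (φ Polynomial.X)

/-- r̃_{Ψ,n} = (2z)^{2n−1}·D₁ⁿ(Ψ(x)z) ∈ L, where z = y + 𝗊(x)/2. -/
def rtB (g m : ℕ) (L : Type) [Field L]
    (φ : Polynomial (BRing g m) →+* L) (y : L) (D : L → L) (n : ℕ) : L :=
  (2 * (y + φ (qB g m) / 2)) ^ (2*(n:ℤ) - 1)
    * D^[n] (φ (PsiB g m) * (y + φ (qB g m) / 2))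

/-- C_{m,n} = ∏_{r=0}^{n−1} (m − 2r). -/
def CcB (m : ℤ) (n : ℕ) : ℤ := ∏ r ∈ Finset.range n, (m - 2*(r : ℤ))


section DerAux
variable {L : Type*} [Field L] [CharZero L] (D : L → L)
  (hDadd : ∀ a b : L, D (a + b) = D a + D b)
  (hDmul : ∀ a b : L, D (a * b) = a * D b + D a * b)

include hDadd in
lemma myD0 : D 0 = 0 := by
  have h := hDadd 0 0
  simp only [add_zero] at h
  exact (left_eq_add.mp h)

include hDmul in
lemma myD1 : D 1 = 0 := by
  have h := hDmul 1 1
  simp only [mul_one, one_mul] at h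
  exact (left_eq_add.mp h)

include hDadd in
lemma myDneg (a : L) : D (-a) = - D a := by
  have h := hDadd a (-a)
  simp only [add_neg_cancel] at h
  rw [myD0 D hDadd] at h
  exact (neg_eq_of_add_eq_zero_right h.symm).symm

include hDadd hDmul in
lemma myDnat (n : ℕ) : D (n : L) = 0 := by
  induction n with
  | zero => simpa using myD0 D hDadd
  | succ k ih =>
    push_cast
    rw [hDadd, ih, myD1 D hDmul]
    ring

include hDadd hDmul in
lemma myDint (n : ℤ) : D (n : L) = 0 := by
  rcases n with n | n
  · simpa using myDnat D hDadd hDmul n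
  · rw [Int.cast_negSucc, myDneg D hDadd, myDnat D hDadd hDmul]
    ring

include hDadd hDmul in
lemma myDinv (a : L) : D a⁻¹ = - D a * (a⁻¹ * a⁻¹) := by
  rcases eq_or_ne a 0 with rfl | ha
  · simp [myD0 D hDadd]
  · have h : a * D a⁻¹ = -(D a * a⁻¹) := by
      have h0 := hDmul a a⁻¹
      rw [mul_inv_cancel₀ ha, myD1 D hDmul] at h0
      exact (neg_eq_of_add_eq_zero_left h0.symm).symm
    calc D a⁻¹ = a⁻¹ * (a * D a⁻¹) := by rw [← mul_assoc, inv_mul_cancel₀ ha, one_mul]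
      _ = a⁻¹ * -(D a * a⁻¹) := by rw [h]
      _ = - D a * (a⁻¹ * a⁻¹) := by ring

include hDadd hDmul in
lemma myDrat (q : ℚ) : D (q : L) = 0 := by
  rw [Rat.cast_def, div_eq_mul_inv, hDmul, myDinv D hDadd hDmul,
    myDint D hDadd hDmul, myDnat D hDadd hDmul]
  ring

include hDmul in
lemma myDpow' (a : L) (n : ℕ) : D (a ^ (n+1)) = (↑(n+1) : L) * a ^ n * D a := by
  induction n with
  | zero => simp
  | succ k ih =>
    rw [pow_succ, hDmul, ih]
    push_cast
    ring

include hDmul in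
lemma myDpow (a : L) (n : ℕ) : D (a ^ n) * a = n * a ^ n * D a := by
  cases n with
  | zero => simp [myD1 D hDmul]
  | succ k => rw [myDpow' D hDmul]; push_cast; ring

include hDadd hDmul in
lemma myDzpow (a : L) (ha : a ≠ 0) (k : ℤ) : D (a ^ k) * a = k * a ^ k * D a := by
  rcases k with n | n
  · simpa using myDpow D hDmul a n
  · have h := myDpow D hDmul a (n + 1)
    have hb : a ^ (n+1) ≠ 0 := pow_ne_zero _ ha
    rw [zpow_negSucc, myDinv D hDadd hDmul]
    push_cast
    calc -D (a^(n+1)) * ((a^(n+1))⁻¹ * (a^(n+1))⁻¹) * a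
        = -((a^(n+1))⁻¹ * (a^(n+1))⁻¹) * (D (a^(n+1)) * a) := by ring
      _ = -((a^(n+1))⁻¹ * (a^(n+1))⁻¹) * ((↑(n+1) : L) * a^(n+1) * D a) := by rw [h]
      _ = -(↑(n+1) : L) * ((a^(n+1))⁻¹ * ((a^(n+1))⁻¹ * a^(n+1))) * D a := by ring
      _ = -(↑(n+1) : L) * (a^(n+1))⁻¹ * D a := by rw [inv_mul_cancel₀ hb, mul_one]
      _ = -(↑n + 1) * (a^(n+1))⁻¹ * D a := by push_cast; ring

end DerAux

section EvalAux
variable {g m : ℕ} {L : Type} [Field L] [CharZero L] (φ : Polynomial (BRing g m) →+* L)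

def EB : BQ g m →+* L :=
  MvPolynomial.eval₂Hom (Rat.castHom L) (fun v => φ (Polynomial.C (MvPolynomial.X v)))

lemma psiB_C (c : BQ g m) : psiB g m L φ (C c) = EB φ c := by
  simp [psiB, EB]

lemma psiB_X : psiB g m L φ X = φ X := by
  simp [psiB]

/-- ψ of the "same" polynomial over ℚ agrees with φ of the polynomial over ℤ, for
polynomials built from variable-coefficients. -/
lemma psiB_pBQ : psiB g m L φ (pBQ g m) = φ (pB g m) := by
  simp only [pBQ, pB, map_add, map_pow, map_sum, map_mul, psiB_C, psiB_X]
  simp [EB]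

lemma psiB_qBQ : psiB g m L φ (qBQ g m) = φ (qB g m) := by
  simp only [qBQ, qB, map_sum, map_mul, map_pow, psiB_C, psiB_X]
  simp [EB]

def PsiBQ (g m : ℕ) : Polynomial (BQ g m) :=
  ∑ i : Fin (m+1), C (MvPolynomial.X (Sum.inr i)) * X ^ (i : ℕ)

lemma psiB_PsiBQ : psiB g m L φ (PsiBQ g m) = φ (PsiB g m) := by
  simp only [PsiBQ, PsiB, map_sum, map_mul, map_pow, psiB_C, psiB_X]
  simp [EB]

variable (D : L → L)
  (hDadd : ∀ a b : L, D (a + b) = D a + D b)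
  (hDmul : ∀ a b : L, D (a * b) = a * D b + D a * b)
  (hDc : ∀ c : BRing g m, D (φ (C c)) = 0)

include hDadd hDmul hDc in
lemma myDE (c : BQ g m) : D (EB φ c) = 0 := by
  induction c using MvPolynomial.induction_on with
  | C a => simpa [EB] using myDrat D hDadd hDmul a
  | add p q hp hq => rw [map_add, hDadd, hp, hq]; ring
  | mul_X p v hp =>
    rw [map_mul, hDmul, hp]
    have h : EB (g := g) (m := m) φ (MvPolynomial.X v) = φ (Polynomial.C (MvPolynomial.X v)) := by
      simp [EB]
    rw [h, hDc]
    ring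

variable (hDx : D (φ X) = 1)

include hDadd hDmul hDc hDx in
lemma myDpsi (P : Polynomial (BQ g m)) :
    D (psiB g m L φ P) = psiB g m L φ (derivative P) := by
  induction P using Polynomial.induction_on with
  | C a => simp [psiB_C, myDE φ D hDadd hDmul hDc]
  | add p q hp hq => rw [map_add, hDadd, hp, hq, derivative_add, map_add]
  | monomial n a _ =>
    rw [derivative_C_mul, derivative_X_pow, map_mul, map_mul, psiB_C, map_mul,
      map_pow, psiB_X, hDmul, map_natCast, map_pow, psiB_X,
      myDpow' D hDmul, myDE φ D hDadd hDmul hDc, hDx]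
    rw [map_natCast, Nat.add_sub_cancel]
    push_cast
    ring

end EvalAux

/-- each r̃_{Ψ,n} is a polynomial in x with coefficients in B⊗ℚ, and
r̃_{Ψ,n+1} = 2(2(d/dx r̃_{Ψ,n})𝖿(x) + (1−2n)r̃_{Ψ,n}(d/dx 𝖿(x))). The fraction field L of
B[x][y]/(y²+𝗊(x)y−𝗉(x)) with its derivation D₁ (D₁x = 1, vanishing on B) is quantified
over all its realizations. -/
theorem stmt15 (g m : ℕ) (hg : 1 ≤ g)
    (L : Type) [Field L] [CharZero L]
    (φ : Polynomial (BRing g m) →+* L) (y : L) (D : L → L)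
    (hinj : Function.Injective φ)
    (hy : y ^ 2 + φ (qB g m) * y = φ (pB g m))
    (hind : ∀ u v : Polynomial (BRing g m), φ v * y = φ u → v = 0)
    (hDadd : ∀ a b : L, D (a + b) = D a + D b)
    (hDmul : ∀ a b : L, D (a * b) = a * D b + D a * b)
    (hDx : D (φ X) = 1)
    (hDc : ∀ c : BRing g m, D (φ (C c)) = 0) :
    (∃ r : ℕ → Polynomial (BQ g m),
      ∀ n : ℕ, psiB g m L φ (r n) = rtB g m L φ y D n) ∧
    (∀ (rp : Polynomial (BQ g m)) (n : ℕ), psiB g m L φ rp = rtB g m L φ y D n →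
      psiB g m L φ (2 * (2 * (Polynomial.derivative rp) * fBQ g m
          + ((1 - 2*(n:ℤ) : ℤ) : Polynomial (BQ g m)) * rp
            * Polynomial.derivative (fBQ g m)))
        = rtB g m L φ y D (n+1)) := by
  classical
  set ψ := psiB g m L φ with hψdef
  set z : L := y + φ (qB g m) / 2 with hzdef
  set w : L := 2 * z with hwdef
  have hrt : ∀ n : ℕ, rtB g m L φ y D n
      = w ^ (2*(n:ℤ) - 1) * D^[n] (φ (PsiB g m) * z) := by
    intro n
    rw [rtB, ← hzdef, ← hwdef]
  have hDψ : ∀ P : Polynomial (BQ g m), D (ψ P) = ψ (derivative P) :=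
    fun P => myDpsi φ D hDadd hDmul hDc hDx P
  -- z² = ψ f
  have hq4 : ψ (C (MvPolynomial.C ((4:ℚ)⁻¹))) = (4:L)⁻¹ := by
    rw [hψdef, psiB_C]
    simp [EB]
  have hzsq : z ^ 2 = ψ (fBQ g m) := by
    rw [fBQ, map_add, map_mul, map_pow, hψdef, psiB_pBQ, psiB_qBQ, ← hψdef, hq4]
    have h : z ^ 2 = (y^2 + φ (qB g m) * y) + (4:L)⁻¹ * φ (qB g m)^2 := by
      rw [hzdef]
      field_simp
      ring
    rw [h, hy]
  -- z ≠ 0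
  have hzne : z ≠ 0 := by
    intro h
    have h2 : φ (2 : Polynomial (BRing g m)) * y = φ (-(qB g m)) := by
      rw [map_ofNat, map_neg]
      have : z = 0 := h
      rw [hzdef] at this
      linear_combination 2 * this
    have h3 := hind (-(qB g m)) 2 h2
    exact absurd h3 (by norm_num)
  have hwne : w ≠ 0 := by
    rw [hwdef]
    exact mul_ne_zero two_ne_zero hzne
  have hwsq : w * w = 4 * ψ (fBQ g m) := by
    rw [← hzsq, hwdef]
    ring
  have hwDw : w * D w = 2 * ψ (derivative (fBQ g m)) := by
    have h1 : D (w * w) = 2 * (w * D w) := by rw [hDmul]; ring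
    have h2 : D (w * w) = 4 * ψ (derivative (fBQ g m)) := by
      have hD4 : D (4:L) = 0 := by
        have h := myDnat D hDadd hDmul 4
        norm_num at h
        exact h
      rw [hwsq, hDmul, hDψ, hD4]
      ring
    have := h1.symm.trans h2
    have h5 : (2:L) * (w * D w) = 2 * (2 * ψ (derivative (fBQ g m))) := by
      rw [this]; ring
    exact mul_left_cancel₀ two_ne_zero h5
  have hz' : ∀ k : ℤ, D (w ^ k) * w = k * w ^ k * D w :=
    myDzpow D hDadd hDmul w hwne
  -- main recurrence step
  have hstep : ∀ (rp : Polynomial (BQ g m)) (n : ℕ), ψ rp = rtB g m L φ y D n →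
      ψ (2 * (2 * (Polynomial.derivative rp) * fBQ g m
          + ((1 - 2*(n:ℤ) : ℤ) : Polynomial (BQ g m)) * rp
            * Polynomial.derivative (fBQ g m)))
        = rtB g m L φ y D (n+1) := by
    intro rp n hr
    have hG : D^[n] (φ (PsiB g m) * z) = w ^ (1 - 2*(n:ℤ)) * ψ rp := by
      rw [hr, hrt n, ← mul_assoc, ← zpow_add₀ hwne]
      have he : (1 - 2*(n:ℤ)) + (2*(n:ℤ) - 1) = 0 := by ring
      rw [he, zpow_zero, one_mul]
    rw [hrt (n+1), Function.iterate_succ_apply', hG, hDmul, hDψ]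
    have e1 : w ^ (2*(((n:ℕ)+1:ℕ):ℤ) - 1) * w ^ (1 - 2*(n:ℤ)) = w * w := by
      rw [← zpow_add₀ hwne]
      have he : 2*(((n:ℕ)+1:ℕ):ℤ) - 1 + (1 - 2*(n:ℤ)) = 2 := by push_cast; ring
      rw [he]
      exact zpow_two w
    have e2 : w ^ (2*(((n:ℕ)+1:ℕ):ℤ) - 1) * D (w ^ (1 - 2*(n:ℤ)))
        = ((1 - 2*(n:ℤ) : ℤ) : L) * (w * D w) := by
      have h1 : w ^ (2*(((n:ℕ)+1:ℕ):ℤ) - 1) = w ^ (2*(n:ℤ)) * w := by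
        have he : 2*(((n:ℕ)+1:ℕ):ℤ) - 1 = 2*(n:ℤ) + 1 := by push_cast; ring
        rw [he, zpow_add₀ hwne, zpow_one]
      rw [h1]
      calc w ^ (2*(n:ℤ)) * w * D (w ^ (1 - 2*(n:ℤ)))
          = w ^ (2*(n:ℤ)) * (D (w ^ (1 - 2*(n:ℤ))) * w) := by ring
        _ = w ^ (2*(n:ℤ)) * (((1 - 2*(n:ℤ) : ℤ) : L) * w ^ (1 - 2*(n:ℤ)) * D w) := by
            rw [hz' (1 - 2*(n:ℤ))]
        _ = ((1 - 2*(n:ℤ) : ℤ) : L) * (w ^ (2*(n:ℤ)) * w ^ (1 - 2*(n:ℤ)) * D w) := by ring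
        _ = ((1 - 2*(n:ℤ) : ℤ) : L) * (w * D w) := by
            rw [← zpow_add₀ hwne]
            have he : 2*(n:ℤ) + (1 - 2*(n:ℤ)) = 1 := by ring
            rw [he, zpow_one]
    calc ψ (2 * (2 * (Polynomial.derivative rp) * fBQ g m
          + ((1 - 2*(n:ℤ) : ℤ) : Polynomial (BQ g m)) * rp
            * Polynomial.derivative (fBQ g m)))
        = 2 * (2 * ψ (Polynomial.derivative rp) * ψ (fBQ g m)
            + ((1 - 2*(n:ℤ) : ℤ) : L) * ψ rp * ψ (Polynomial.derivative (fBQ g m))) := by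
          simp only [map_mul, map_add, map_ofNat, map_intCast]
      _ = (w * w) * ψ (Polynomial.derivative rp)
            + (((1 - 2*(n:ℤ) : ℤ) : L) * (w * D w)) * ψ rp := by
          linear_combination (-(ψ (Polynomial.derivative rp))) * hwsq
            + (-(((1 - 2*(n:ℤ) : ℤ) : L)) * ψ rp) * hwDw
      _ = w ^ (2*(((n:ℕ)+1:ℕ):ℤ) - 1)
            * (w ^ (1 - 2*(n:ℤ)) * ψ (Polynomial.derivative rp)
              + D (w ^ (1 - 2*(n:ℤ))) * ψ rp) := by
          linear_combination (-(ψ (Polynomial.derivative rp))) * e1 - ψ rp * e2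
  refine ⟨⟨fun n => Nat.rec (C (MvPolynomial.C ((2:ℚ)⁻¹)) * PsiBQ g m)
      (fun n rn => 2 * (2 * (Polynomial.derivative rn) * fBQ g m
          + ((1 - 2*(n:ℤ) : ℤ) : Polynomial (BQ g m)) * rn
            * Polynomial.derivative (fBQ g m))) n, ?_⟩, hstep⟩
  intro n
  induction n with
  | zero =>
    show ψ (C (MvPolynomial.C ((2:ℚ)⁻¹)) * PsiBQ g m) = rtB g m L φ y D 0
    rw [hrt 0]
    have he : 2*((0:ℕ):ℤ) - 1 = -1 := by norm_num
    rw [he]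
    simp only [Function.iterate_zero, id_eq]
    rw [map_mul, hψdef, psiB_C, psiB_PsiBQ]
    have h2 : EB φ (MvPolynomial.C ((2:ℚ)⁻¹)) = (2:L)⁻¹ := by simp [EB]
    rw [h2, zpow_neg_one, hwdef]
    field_simp
  | succ k ih => exact hstep _ k ih
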